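/- arXiv:1908.04470 — 3 statements merged into one kernel-verified Lean document; each statement's English description precedes it below -/
import Mathlib

section
/- Let V be the LUM loss with parameter 0 < p < ∞ and q = ∞. For every η ∈ [0,1], with Φ_η(t) = η V(t) + (1−η) V(−t) and t*(η) the LUM population minimizer, one has Φ_η(0) − Φ_η(t*(η)) ≥ (p/(p+1)) |2η − 1|. -/
open Real Set

/-- Linear lower bound for the excess conditional risk at `0` for the LUM loss with
`0 < p < ∞` and `q = ∞`: `Φ_η(0) − Φ_η(t*(η)) ≥ (p/(p+1)) |2η − 1|`. -/
theorem lum_excess_conditional_risk_lower_bound_finite_p_infinite_q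
    (p : ℝ) (hp : 0 < p)
    (V : ℝ → ℝ)
    (hV : ∀ t : ℝ, V t = if t < p / (1 + p) then 1 - t
      else (1 / (1 + p)) * Real.exp (-((1 + p) * t - p)))
    (η : ℝ) (hη : η ∈ Icc (0 : ℝ) 1)
    (Φ : ℝ → ℝ) (hΦ : ∀ t : ℝ, Φ t = η * V t + (1 - η) * V (-t))
    (tstar : ℝ)
    (htstar : tstar = if η < 1 / 2
      then (1 / (1 + p)) * (Real.log (η / (1 - η)) - p)
      else (1 / (1 + p)) * (Real.log (η / (1 - η)) + p)) :
    Φ 0 - Φ tstar ≥ (p / (p + 1)) * |2 * η - 1| := by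
  have hp1 : (0:ℝ) < 1 + p := by linarith
  have hpq : (0:ℝ) < p / (1 + p) := by positivity
  have hV0 : V 0 = 1 := by rw [hV, if_pos hpq]; ring
  have hΦ0 : Φ 0 = 1 := by rw [hΦ, neg_zero, hV0]; ring
  obtain ⟨hη0, hη1⟩ := hη
  rcases eq_or_lt_of_le hη0 with h0 | h0
  · -- η = 0
    have hη' : η = 0 := h0.symm
    subst hη'
    have ht : -tstar = p / (1 + p) := by
      rw [htstar, if_pos (by norm_num)]
      simp
      field_simp
    have hVm : V (-tstar) = 1 / (1 + p) := by
      rw [hV, if_neg (by rw [ht]; exact lt_irrefl _), ht]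
      have h1 : (1 + p) * (p / (1 + p)) - p = 0 := by field_simp; ring
      rw [h1]; simp
    rw [hΦ0, hΦ, hVm, abs_of_nonpos (by norm_num), ge_iff_le, ← sub_nonneg]
    have : 1 - (0 * V tstar + (1 - 0) * (1 / (1 + p))) - p / (p + 1) * -(2 * 0 - 1)
        = 0 := by field_simp; ring
    rw [this]
  · rcases eq_or_lt_of_le hη1 with h1 | h1
    · -- η = 1
      subst h1
      have ht : tstar = p / (1 + p) := by
        rw [htstar, if_neg (by norm_num)]
        simp
        field_simp
      have hVt : V tstar = 1 / (1 + p) := by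
        rw [hV, if_neg (by rw [ht]; exact lt_irrefl _), ht]
        have h1 : (1 + p) * (p / (1 + p)) - p = 0 := by field_simp; ring
        rw [h1]; simp
      rw [hΦ0, hΦ, hVt, abs_of_nonneg (by norm_num), ge_iff_le, ← sub_nonneg]
      have : 1 - (1 * (1 / (1 + p)) + (1 - 1) * V (-tstar)) - p / (p + 1) * (2 * 1 - 1)
          = 0 := by field_simp; ring
      rw [this]
    · -- 0 < η < 1
      have h1η : (0:ℝ) < 1 - η := by linarith
      have hr : (0:ℝ) < η / (1 - η) := by positivity
      set L := Real.log (η / (1 - η)) with hL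
      have hexpL : Real.exp L = η / (1 - η) := Real.exp_log hr
      have hnegL : -L = Real.log ((1 - η) / η) := by
        rw [hL, ← Real.log_inv, inv_div]
      have hexpnegL : Real.exp (-L) = (1 - η) / η := by
        rw [hnegL, Real.exp_log (by positivity)]
      have hloglt : L ≤ η / (1 - η) - 1 :=
        Real.log_le_sub_one_of_pos hr
      have hloglt' : -L ≤ (1 - η) / η - 1 := by
        rw [hnegL]; exact Real.log_le_sub_one_of_pos (by positivity)
      rcases lt_or_ge η (1/2) with hhalf | hhalf
      · -- η < 1/2 : L < 0
        have hLneg : L < 0 := Real.log_neg hr (by rw [div_lt_one h1η]; linarith)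
        have ht : tstar = (1 / (1 + p)) * (L - p) := by rw [htstar, if_pos hhalf]
        have hpe : p / (1 + p) = 1 / (1 + p) * p := by ring
        have htlt : tstar < p / (1 + p) := by
          rw [ht, hpe]
          exact mul_lt_mul_of_pos_left (by linarith) (by positivity)
        have hVt : V tstar = 1 - tstar := by rw [hV, if_pos htlt]
        have hntge : ¬ (-tstar < p / (1 + p)) := by
          push_neg
          have h5 : -tstar = 1 / (1 + p) * (p - L) := by rw [ht]; ring
          rw [h5, hpe]
          exact mul_le_mul_of_nonneg_left (by linarith) (by positivity)
        have hVm : V (-tstar) = (1 / (1 + p)) * (η / (1 - η)) := by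
          rw [hV, if_neg hntge, ht]
          have h2 : -((1 + p) * -(1 / (1 + p) * (L - p)) - p) = L := by
            field_simp; ring
          rw [h2, hexpL]
        have key : η * (-L) ≤ 1 - 2 * η := by
          have h3 := mul_le_mul_of_nonneg_left hloglt' (le_of_lt h0)
          have h4 : η * ((1 - η) / η - 1) = 1 - 2 * η := by field_simp; ring
          linarith [h4 ▸ h3]
        rw [hΦ0, hΦ, hVt, hVm, ht, abs_of_nonpos (by linarith), ge_iff_le, ← sub_nonneg]
        have expand : 1 - (η * (1 - 1 / (1 + p) * (L - p)) +
            (1 - η) * (1 / (1 + p) * (η / (1 - η)))) - p / (p + 1) * -(2 * η - 1)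
            = (1 - 2 * η + η * L) / (1 + p) := by
          field_simp; ring
        rw [expand]
        apply div_nonneg _ (le_of_lt hp1)
        linarith
      · -- η ≥ 1/2 : L ≥ 0
        have hL0 : 0 ≤ L := Real.log_nonneg (by rw [le_div_iff₀ h1η]; linarith)
        have ht : tstar = (1 / (1 + p)) * (L + p) := by
          rw [htstar, if_neg (not_lt.2 hhalf)]
        have hpe : p / (1 + p) = 1 / (1 + p) * p := by ring
        have htge : ¬ (tstar < p / (1 + p)) := by
          push_neg
          rw [ht, hpe]
          exact mul_le_mul_of_nonneg_left (by linarith) (by positivity)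
        have htpos : 0 < tstar := by
          rw [ht]; positivity
        have hVt : V tstar = (1 / (1 + p)) * ((1 - η) / η) := by
          rw [hV, if_neg htge, ht]
          have h2 : -((1 + p) * (1 / (1 + p) * (L + p)) - p) = -L := by
            field_simp; ring
          rw [h2, hexpnegL]
        have hVm : V (-tstar) = 1 + tstar := by
          rw [hV, if_pos (by linarith : -tstar < p / (1 + p))]
          ring
        have key : (1 - η) * L ≤ 2 * η - 1 := by
          have h3 := mul_le_mul_of_nonneg_left hloglt (le_of_lt h1η)
          have h4 : (1 - η) * (η / (1 - η) - 1) = 2 * η - 1 := by field_simp; ring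
          linarith [h4 ▸ h3]
        rw [hΦ0, hΦ, hVt, hVm, ht, abs_of_nonneg (by linarith), ge_iff_le, ← sub_nonneg]
        have expand : 1 - (η * (1 / (1 + p) * ((1 - η) / η)) +
            (1 - η) * (1 + 1 / (1 + p) * (L + p))) - p / (p + 1) * (2 * η - 1)
            = (2 * η - 1 - (1 - η) * L) / (1 + p) := by
          field_simp; ring
        rw [expand]
        apply div_nonneg _ (le_of_lt hp1)
        linarith
end

section
/- For 0 ≤ p < ∞ and 0 < q < ∞, the LUM loss V : ℝ → ℝ₊, defined by V(t) = 1 − t for t < p/(1+p) and V(t) = (1/(1+p)) (q/((1+p)t − p + q))^q for t ≥ p/(1+p), is a convex, continuously differentiable, non-increasing function on ℝ. -/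
open Real Set

/-- For `0 ≤ p < ∞` and `0 < q < ∞`, the LUM loss `V : ℝ → ℝ₊` is a nonnegative,
convex, continuously differentiable, non-increasing function on `ℝ`. -/
theorem lum_loss_convex_smooth_antitone
    (p q : ℝ) (hp : 0 ≤ p) (hq : 0 < q)
    (V : ℝ → ℝ)
    (hV : ∀ t : ℝ, V t = if t < p / (1 + p) then 1 - t
      else (1 / (1 + p)) * (q / ((1 + p) * t - p + q)) ^ q) :
    (∀ t : ℝ, 0 ≤ V t) ∧ ConvexOn ℝ Set.univ V ∧ ContDiff ℝ 1 V ∧ Antitone V := by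
  have ha : (0:ℝ) < 1 + p := by linarith
  set t0 : ℝ := p / (1 + p) with ht0_def
  have ht0 : (1 + p) * t0 = p := by
    rw [ht0_def]; field_simp
  -- D t : the effective denominator
  set D : ℝ → ℝ := fun t => max ((1 + p) * t - p + q) q with hD_def
  have hDq : ∀ t, q ≤ D t := fun t => le_max_right _ _
  have hDpos : ∀ t, 0 < D t := fun t => lt_of_lt_of_le hq (hDq t)
  -- candidate derivative
  set W : ℝ → ℝ := fun t => -((q / D t) ^ (q + 1)) with hW_def
  have hDlt : ∀ t, t < t0 → D t = q := by
    intro t ht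
    have : (1 + p) * t - p + q ≤ q := by
      have h1 := (lt_div_iff₀ ha).mp ht
      nlinarith
    simp [hD_def, max_eq_right this]
  have hDge : ∀ t, t0 ≤ t → D t = (1 + p) * t - p + q := by
    intro t ht
    have h1 : p ≤ (1 + p) * t := by
      have h1 := (div_le_iff₀ ha).mp ht
      nlinarith
    have : q ≤ (1 + p) * t - p + q := by linarith
    simp [hD_def, max_eq_left this]
  -- right branch function
  set f : ℝ → ℝ := fun s => (1 / (1 + p)) * (q / ((1 + p) * s - p + q)) ^ q with hf_def
  -- derivative of the right branch wherever denominator positive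
  have hf_deriv : ∀ t : ℝ, 0 < (1 + p) * t - p + q →
      HasDerivAt f (-((q / ((1 + p) * t - p + q)) ^ (q + 1))) t := by
    intro t hd
    set d : ℝ := (1 + p) * t - p + q with hd_def
    have hdne : d ≠ 0 := ne_of_gt hd
    have h1 : HasDerivAt (fun s : ℝ => (1 + p) * s - p + q) (1 + p) t := by
      simpa using (((hasDerivAt_id t).const_mul (1 + p)).sub_const p).add_const q
    have h2 : HasDerivAt (fun s : ℝ => q / ((1 + p) * s - p + q))
        (q * (-(1 + p) / d ^ 2)) t := by
      simpa [div_eq_mul_inv] using (h1.inv hdne).const_mul q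
    have hb : (0:ℝ) < q / d := div_pos hq hd
    have h3 := (h2.rpow_const (p := q) (Or.inl (ne_of_gt hb))).const_mul (1 / (1 + p))
    refine h3.congr_deriv ?_
    rw [show q + 1 = (q - 1) + 2 by ring, Real.rpow_add hb,
      show ((2:ℝ) = ((2:ℕ):ℝ)) by norm_num, Real.rpow_natCast, div_pow]
    field_simp
    ring
  have hVf : ∀ x, t0 ≤ x → V x = f x := by
    intro x hx
    rw [hV x, if_neg (not_lt.mpr hx)]
  have hVg : ∀ x, x < t0 → V x = 1 - x := by
    intro x hx; rw [hV x, if_pos hx]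
  have hd_t0 : (1 + p) * t0 - p + q = q := by rw [ht0]; ring
  have hVt0 : V t0 = 1 - t0 := by
    rw [hVf t0 le_rfl]
    show (1 / (1 + p)) * (q / ((1 + p) * t0 - p + q)) ^ q = 1 - t0
    rw [hd_t0, div_self (ne_of_gt hq), Real.one_rpow, ht0_def]
    field_simp
    ring
  have hderiv : ∀ t, HasDerivAt V (W t) t := by
    intro t
    have hg' : HasDerivAt (fun s : ℝ => 1 - s) (-1) t := by
      exact (hasDerivAt_id t).const_sub 1
    rcases lt_trichotomy t t0 with h | h | h
    · have hW1 : W t = -1 := by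
        show -((q / D t) ^ (q + 1)) = -1
        rw [hDlt t h, div_self (ne_of_gt hq), Real.one_rpow]
      rw [hW1]
      refine hg'.congr_of_eventuallyEq ?_
      exact Filter.eventuallyEq_of_mem (Iio_mem_nhds h) (fun x hx => hVg x hx)
    · subst h
      have hW1 : W t0 = -1 := by
        show -((q / D t0) ^ (q + 1)) = -1
        rw [hDge t0 le_rfl, hd_t0, div_self (ne_of_gt hq), Real.one_rpow]
      rw [hW1]
      have hleft : HasDerivWithinAt V (-1) (Iic t0) t0 := by
        refine (hg'.hasDerivWithinAt).congr (fun x hx => ?_) (by simpa using hVt0)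
        rcases lt_or_eq_of_le (mem_Iic.mp hx) with h' | h'
        · exact hVg x h'
        · rw [h']; simpa using hVt0
      have hright : HasDerivWithinAt V (-1) (Ici t0) t0 := by
        have hd : 0 < (1 + p) * t0 - p + q := by rw [hd_t0]; exact hq
        have := (hf_deriv t0 hd).hasDerivWithinAt (s := Ici t0)
        rw [hd_t0, div_self (ne_of_gt hq), Real.one_rpow] at this
        exact this.congr (fun x hx => hVf x (mem_Ici.mp hx)) (hVf t0 le_rfl)
      have := hleft.union hright
      rw [Iic_union_Ici] at this
      exact this.hasDerivAt Filter.univ_mem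
    · have hDt := hDge t h.le
      have hd : 0 < (1 + p) * t - p + q := by rw [← hDt]; exact hDpos t
      have hfd := hf_deriv t hd
      have hW1 : W t = -((q / ((1 + p) * t - p + q)) ^ (q + 1)) := by
        show -((q / D t) ^ (q + 1)) = _
        rw [hDt]
      rw [hW1]
      refine hfd.congr_of_eventuallyEq ?_
      exact Filter.eventuallyEq_of_mem (Ioi_mem_nhds h) (fun x hx => hVf x (le_of_lt hx))
  have hdiff : Differentiable ℝ V := fun t => (hderiv t).differentiableAt
  have hderiv_eq : deriv V = W := funext fun t => (hderiv t).deriv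
  have hWcont : Continuous W := by
    refine Continuous.neg (Continuous.rpow_const ?_ (fun x => Or.inr (by positivity)))
    have hDcont : Continuous D :=
      (((continuous_const.mul continuous_id).sub continuous_const).add continuous_const).max
        continuous_const
    exact continuous_const.div hDcont (fun x => ne_of_gt (hDpos x))
  have hWmono : Monotone W := by
    intro s t hst
    have h1 : D s ≤ D t := by
      apply max_le_max _ le_rfl
      nlinarith [mul_le_mul_of_nonneg_left hst (le_of_lt ha)]
    have h2 : q / D t ≤ q / D s := div_le_div_of_nonneg_left hq.le (hDpos s) h1
    have h3 : (q / D t) ^ (q + 1) ≤ (q / D s) ^ (q + 1) :=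
      Real.rpow_le_rpow (le_of_lt (div_pos hq (hDpos t))) h2 (by positivity)
    show -((q / D s) ^ (q + 1)) ≤ -((q / D t) ^ (q + 1))
    linarith
  have hWnonpos : ∀ t, W t ≤ 0 := fun t =>
    neg_nonpos.mpr (Real.rpow_nonneg (le_of_lt (div_pos hq (hDpos t))) _)
  refine ⟨?_, ?_, ?_, ?_⟩
  · intro t
    rcases lt_or_ge t t0 with h | h
    · rw [hVg t h]
      have ht1 : t0 ≤ 1 := by rw [ht0_def, div_le_one ha]; linarith
      linarith
    · rw [hVf t h]
      have hd : 0 < (1 + p) * t - p + q := by rw [← hDge t h]; exact hDpos t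
      have := Real.rpow_nonneg (le_of_lt (div_pos hq hd)) q
      positivity
  · exact Monotone.convexOn_univ_of_deriv hdiff (by rw [hderiv_eq]; exact hWmono)
  · exact contDiff_one_iff_deriv.mpr ⟨hdiff, by rw [hderiv_eq]; exact hWcont⟩
  · exact antitone_of_deriv_nonpos hdiff (fun x => by rw [hderiv_eq]; exact hWnonpos x)
end

section
/- Let V be the LUM loss with parameter 0 ≤ p < ∞ and q = ∞, and for η ∈ (0,1) let Φ_η(t) = η V(t) + (1−η) V(−t). Then the function t*(η) defined by t*(η) = (1/(1+p))[ln(η/(1−η)) − p] for η < 1/2 and t*(η) = (1/(1+p))[ln(η/(1−η)) + p] for η ≥ 1/2 is a global minimizer of Φ_η over ℝ, i.e. Φ_η(t*(η)) ≤ Φ_η(t) for all t ∈ ℝ. -/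
open Real Set

private lemma lum_lin_lb (p : ℝ) (hp : 0 ≤ p) (V : ℝ → ℝ)
    (hV : ∀ t : ℝ, V t = if t < p / (1 + p) then 1 - t
      else (1 / (1 + p)) * Real.exp (-((1 + p) * t - p))) (t : ℝ) :
    1 - t ≤ V t := by
  have hP : (0:ℝ) < 1 + p := by linarith
  rw [hV t]
  by_cases h : t < p / (1 + p)
  · rw [if_pos h]
  · rw [if_neg h]
    have h1 : 1 - ((1 + p) * t - p) ≤ Real.exp (-((1 + p) * t - p)) := by
      have := Real.add_one_le_exp (-((1 + p) * t - p)); linarith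
    rw [div_mul_eq_mul_div, one_mul, le_div_iff₀ hP]
    nlinarith

private lemma lum_exp_lb (p : ℝ) (hp : 0 ≤ p) (V : ℝ → ℝ)
    (hV : ∀ t : ℝ, V t = if t < p / (1 + p) then 1 - t
      else (1 / (1 + p)) * Real.exp (-((1 + p) * t - p)))
    (u0 : ℝ) (hu0 : 0 ≤ u0) (t : ℝ) :
    Real.exp (-u0) * (1 + u0 - ((1 + p) * t - p)) ≤ (1 + p) * V t := by
  have hP : (0:ℝ) < 1 + p := by linarith
  rw [hV t]
  by_cases h : t < p / (1 + p)
  · rw [if_pos h]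
    -- here u := (1+p)t - p < 0, and (1+p)(1-t) = 1 - u
    have hu : (1 + p) * t - p < 0 := by
      have := (lt_div_iff₀ hP).mp h
      nlinarith
    have hc1 : Real.exp (-u0) * (1 + u0) ≤ 1 := by
      have h1 : u0 + 1 ≤ Real.exp u0 := Real.add_one_le_exp u0
      have h2 : Real.exp (-u0) * Real.exp u0 = 1 := by
        rw [← Real.exp_add]; simp
      nlinarith [Real.exp_pos (-u0)]
    have hc2 : Real.exp (-u0) ≤ 1 := Real.exp_le_one_iff.mpr (by linarith)
    nlinarith [Real.exp_pos (-u0)]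
  · rw [if_neg h]
    have key : Real.exp (-u0) * (1 + u0 - ((1 + p) * t - p))
        ≤ Real.exp (-((1 + p) * t - p)) := by
      have h1 : (u0 - ((1 + p) * t - p)) + 1 ≤ Real.exp (u0 - ((1 + p) * t - p)) :=
        Real.add_one_le_exp _
      have h2 : Real.exp (-u0) * Real.exp (u0 - ((1 + p) * t - p))
          = Real.exp (-((1 + p) * t - p)) := by
        rw [← Real.exp_add]; ring_nf
      nlinarith [Real.exp_pos (-u0)]
    calc Real.exp (-u0) * (1 + u0 - ((1 + p) * t - p))
        ≤ Real.exp (-((1 + p) * t - p)) := key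
      _ = (1 + p) * (1 / (1 + p) * Real.exp (-((1 + p) * t - p))) := by
          field_simp

private lemma lum_key (p : ℝ) (hp : 0 ≤ p) (V : ℝ → ℝ)
    (hV : ∀ t : ℝ, V t = if t < p / (1 + p) then 1 - t
      else (1 / (1 + p)) * Real.exp (-((1 + p) * t - p)))
    (a b : ℝ) (ha : 0 < a) (hb : 0 < b) (hab : b ≤ a) (s : ℝ)
    (hs : s = (Real.log (a / b) + p) / (1 + p)) :
    ∀ t : ℝ, a * V s + b * V (-s) ≤ a * V t + b * V (-t) := by
  have hP : (0:ℝ) < 1 + p := by linarith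
  set u0 : ℝ := Real.log (a / b) with hu0def
  have hu0 : 0 ≤ u0 := Real.log_nonneg ((one_le_div hb).mpr hab)
  have hac : a * Real.exp (-u0) = b := by
    rw [Real.exp_neg, hu0def, Real.exp_log (by positivity)]
    field_simp
  have hPs : (1 + p) * s = u0 + p := by
    rw [hs]; field_simp
  -- value of V at s
  have hVs : (1 + p) * V s = Real.exp (-u0) := by
    rw [hV s, if_neg]
    · have harg : -((1 + p) * s - p) = -u0 := by rw [hPs]; ring
      rw [harg]; field_simp
    · push_neg
      rw [hs, div_le_div_iff₀ hP hP]
      nlinarith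
  -- value of V at -s
  have hVms : V (-s) = 1 + s := by
    rw [hV (-s)]
    by_cases h : -s < p / (1 + p)
    · rw [if_pos h]; ring
    · rw [if_neg h]
      push_neg at h
      have h' : p ≤ -s * (1 + p) := (div_le_iff₀ hP).mp h
      have h'' : u0 + 2 * p ≤ 0 := by nlinarith
      have hu00 : u0 = 0 := le_antisymm (by linarith) hu0
      have hp0 : p = 0 := by linarith
      have hs0 : s = 0 := by
        have := hPs; rw [hu00, hp0] at this; linarith
      rw [hs0, hp0]; norm_num
  intro t
  have h1 : 1 - (-t) ≤ V (-t) := lum_lin_lb p hp V hV (-t)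
  have h2 : Real.exp (-u0) * (1 + u0 - ((1 + p) * t - p)) ≤ (1 + p) * V t :=
    lum_exp_lb p hp V hV u0 hu0 t
  rw [← mul_le_mul_iff_right₀ hP]
  have h2' : a * (Real.exp (-u0) * (1 + u0 - ((1 + p) * t - p))) ≤ a * ((1 + p) * V t) :=
    mul_le_mul_of_nonneg_left h2 ha.le
  have h1' : b * (1 + p) * (1 + t) ≤ b * (1 + p) * V (-t) := by
    have : (0:ℝ) ≤ b * (1 + p) := by positivity
    nlinarith
  have hLHS : (1 + p) * (a * V s + b * V (-s)) = b + b * ((1 + p) + u0 + p) := by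
    rw [hVms]
    have : a * V s = a * Real.exp (-u0) / (1 + p) := by
      rw [← hVs]; field_simp
    rw [this, hac]
    field_simp
    nlinarith [hPs]
  have h2'' : b * (1 + u0 - ((1 + p) * t - p)) ≤ a * ((1 + p) * V t) := by
    calc b * (1 + u0 - ((1 + p) * t - p))
        = a * (Real.exp (-u0) * (1 + u0 - ((1 + p) * t - p))) := by rw [← hac]; ring
      _ ≤ a * ((1 + p) * V t) := h2'
  rw [hLHS]
  nlinarith [h2'', h1']

/-- For the LUM loss with `0 ≤ p < ∞` and `q = ∞` and `η ∈ (0,1)`, the function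
`t*(η)` is a global minimizer of the conditional risk `Φ_η(t) = η V(t) + (1−η) V(−t)`
over `ℝ`. -/
theorem lum_minimizer_is_global_min_infinite_q
    (p : ℝ) (hp : 0 ≤ p)
    (V : ℝ → ℝ)
    (hV : ∀ t : ℝ, V t = if t < p / (1 + p) then 1 - t
      else (1 / (1 + p)) * Real.exp (-((1 + p) * t - p)))
    (η : ℝ) (hη : η ∈ Ioo (0 : ℝ) 1)
    (Φ : ℝ → ℝ) (hΦ : ∀ t : ℝ, Φ t = η * V t + (1 - η) * V (-t))
    (tstar : ℝ)
    (htstar : tstar = if η < 1 / 2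
      then (1 / (1 + p)) * (Real.log (η / (1 - η)) - p)
      else (1 / (1 + p)) * (Real.log (η / (1 - η)) + p)) :
    ∀ t : ℝ, Φ tstar ≤ Φ t := by
  obtain ⟨hη0, hη1⟩ := hη
  have hη1' : 0 < 1 - η := by linarith
  intro t
  rw [hΦ tstar, hΦ t]
  by_cases hhalf : η < 1 / 2
  · rw [if_pos hhalf] at htstar
    have hlog : Real.log ((1 - η) / η) = -Real.log (η / (1 - η)) := by
      rw [Real.log_div (by linarith) (by linarith), Real.log_div (by linarith) (by linarith)]
      ring
    have hms : -tstar = (Real.log ((1 - η) / η) + p) / (1 + p) := by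
      rw [htstar, hlog]; ring
    have key := lum_key p hp V hV (1 - η) η hη1' hη0 (by linarith) (-tstar) hms (-t)
    rw [neg_neg, neg_neg] at key
    linarith
  · rw [if_neg hhalf] at htstar
    push_neg at hhalf
    have hs : tstar = (Real.log (η / (1 - η)) + p) / (1 + p) := by
      rw [htstar]; ring
    have key := lum_key p hp V hV η (1 - η) hη0 hη1' (by linarith) tstar hs t
    linarith
end
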